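/- Assume f \in C^1([0,\infty)) satisfies, for some \gamma > 0: f(u) < 0 for u \in (0,\gamma), f(u) > 0 for u > \gamma, and f'(u) - (p-1)f(u)/u > 0 for u > \gamma. Let u be a positive solution of the one-dimensional problem (1), let x_0 \in (0,1) satisfy u(x_0) = \gamma, and let w be a solution of the linearized problem (4) with w(x) > 0 for x \in (-1,1). Then (p-1)\,w(x_0)\,\varphi_p(u'(x_0)) - u(x_0)\,w'(x_0)\,\varphi_p'(u'(x_0)) > 0; in particular, w'(x_0) < 0. -/

import Mathlib

open Set

/-- `φ_p(t) = t |t|^{p-2}` (real exponent), with `φ_p(0)=0`. -/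
noncomputable def phi (p t : ℝ) : ℝ := t * |t| ^ (p - 2)

/-- `φ_p'(t) = (p-1) |t|^{p-2}`. -/
noncomputable def phi' (p t : ℝ) : ℝ := (p - 1) * |t| ^ (p - 2)

/-- The derivative of a function on `[-1,1]` (one-sided at the endpoints). -/
noncomputable def du (u : ℝ → ℝ) : ℝ → ℝ := derivWithin u (Set.Icc (-1) 1)

/-- A positive (classical) solution of the one-dimensional problem (1):
`(φ_p(u'))' + λ f(u) = 0` on `(-1,1)`, `u(-1) = u(1) = 0`,
with `u ∈ C^1[-1,1]`, `φ_p ∘ u' ∈ C^1((-1,1))`, and `u > 0` on `(-1,1)`. -/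
structure Sol1D (p lam : ℝ) (f : ℝ → ℝ) (u : ℝ → ℝ) : Prop where
  reg : ContDiffOn ℝ 1 u (Set.Icc (-1) 1)
  reg' : ContDiffOn ℝ 1 (fun x => phi p (du u x)) (Set.Ioo (-1) 1)
  pos : ∀ x ∈ Set.Ioo (-1:ℝ) 1, 0 < u x
  bcm : u (-1) = 0
  bc1 : u 1 = 0
  ode : ∀ x ∈ Set.Ioo (-1:ℝ) 1,
    deriv (fun y => phi p (du u y)) x + lam * f (u x) = 0

/-- A solution of the linearized problem (4) at `u`:
`(φ_p'(u') w')' + λ f'(u) w = 0` on `(-1,1)`, `w(-1) = w(1) = 0`. -/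
structure Lin1D (p lam : ℝ) (f : ℝ → ℝ) (u w : ℝ → ℝ) : Prop where
  reg : ContDiffOn ℝ 1 w (Set.Icc (-1) 1)
  reg' : ContDiffOn ℝ 1 (fun x => phi' p (du u x) * du w x) (Set.Ioo (-1) 1)
  ode : ∀ x ∈ Set.Ioo (-1:ℝ) 1,
    deriv (fun y => phi' p (du u y) * du w y) x + lam * deriv f (u x) * w x = 0
  bcm : w (-1) = 0
  bc1 : w 1 = 0

open Filter Topology

lemma rpow_add_one' {x : ℝ} (hx : 0 < x) (a : ℝ) : x * x ^ a = x ^ (a + 1) := by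
  rw [Real.rpow_add hx, Real.rpow_one, mul_comm]

lemma phi_zero (p : ℝ) : phi p 0 = 0 := by simp [phi]

lemma phi_eq_zero_iff {p t : ℝ} : phi p t = 0 ↔ t = 0 := by
  constructor
  · intro h
    by_contra ht
    exact (mul_ne_zero ht (ne_of_gt (Real.rpow_pos_of_pos (abs_pos.2 ht) _))) h
  · rintro rfl; simp [phi]

lemma phi_pos_iff {p t : ℝ} : 0 < phi p t ↔ 0 < t := by
  rcases lt_trichotomy t 0 with h | rfl | h
  · have h2 : phi p t < 0 := mul_neg_of_neg_of_pos h (Real.rpow_pos_of_pos (abs_pos.2 h.ne) _)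
    exact iff_of_false (by linarith) (by linarith)
  · simp [phi]
  · have h2 : 0 < phi p t := mul_pos h (Real.rpow_pos_of_pos (abs_pos.2 h.ne') _)
    exact iff_of_true h2 h

lemma phi_neg_iff {p t : ℝ} : phi p t < 0 ↔ t < 0 := by
  rcases lt_trichotomy t 0 with h | rfl | h
  · have h2 : phi p t < 0 := mul_neg_of_neg_of_pos h (Real.rpow_pos_of_pos (abs_pos.2 h.ne) _)
    exact iff_of_true h2 h
  · simp [phi]
  · have h2 : 0 < phi p t := mul_pos h (Real.rpow_pos_of_pos (abs_pos.2 h.ne') _)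
    exact iff_of_false (by linarith) (by linarith)

lemma phi_nonneg_iff {p t : ℝ} : 0 ≤ phi p t ↔ 0 ≤ t := by
  rw [← not_lt, ← not_lt, not_iff_not]; exact phi_neg_iff

lemma phi_odd (p t : ℝ) : phi p (-t) = - phi p t := by unfold phi; rw [abs_neg]; ring

lemma phi'_even (p t : ℝ) : phi' p (-t) = phi' p t := by simp [phi']

lemma phi'_pos {p t : ℝ} (hp : 1 < p) (ht : t ≠ 0) : 0 < phi' p t :=
  mul_pos (by linarith) (Real.rpow_pos_of_pos (abs_pos.2 ht) _)

lemma mul_phi' (p t : ℝ) : t * phi' p t = (p - 1) * phi p t := by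
  unfold phi phi'; ring

lemma abs_phi {p t : ℝ} (ht : t ≠ 0) : |phi p t| = |t| ^ (p - 1) := by
  have h1 : (0:ℝ) < |t| := abs_pos.2 ht
  unfold phi
  rw [abs_mul, abs_of_nonneg (Real.rpow_nonneg (abs_nonneg t) _), rpow_add_one' h1,
    show p - 2 + 1 = p - 1 from by ring]

lemma phi_phi {p : ℝ} (hp : 1 < p) (t : ℝ) : phi (p / (p - 1)) (phi p t) = t := by
  rcases eq_or_ne t 0 with rfl | ht
  · simp [phi]
  · have h1 : (0:ℝ) < |t| := abs_pos.2 ht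
    have hp1 : p - 1 ≠ 0 := by intro h; linarith
    conv_lhs => rw [phi, abs_phi ht, ← Real.rpow_mul (abs_nonneg t)]
    have h2 : (p - 1) * (p / (p - 1) - 2) = 2 - p := by field_simp; ring
    rw [h2, phi, mul_assoc, ← Real.rpow_add h1]
    norm_num

lemma phi'_phi' {p t : ℝ} (hp : 1 < p) (ht : t ≠ 0) :
    phi' (p / (p - 1)) (phi p t) * phi' p t = 1 := by
  have h1 : (0:ℝ) < |t| := abs_pos.2 ht
  have hp1 : p - 1 ≠ 0 := by intro h; linarith
  conv_lhs => rw [phi', abs_phi ht, ← Real.rpow_mul (abs_nonneg t)]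
  have h2 : (p - 1) * (p / (p - 1) - 2) = 2 - p := by field_simp; ring
  rw [h2, phi']
  have h3 : |t| ^ (2 - p) * |t| ^ (p - 2) = 1 := by
    rw [← Real.rpow_add h1]; norm_num
  have h4 : (p / (p - 1) - 1) * (p - 1) = 1 := by field_simp; ring
  calc (p / (p - 1) - 1) * |t| ^ (2 - p) * ((p - 1) * |t| ^ (p - 2))
      = ((p / (p - 1) - 1) * (p - 1)) * (|t| ^ (2 - p) * |t| ^ (p - 2)) := by ring
    _ = 1 := by rw [h3, h4, mul_one]

/-- derivative of `|s|^e` at a nonzero point. -/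
lemma hasDerivAt_abs_rpow_ne {e t : ℝ} (ht : t ≠ 0) :
    HasDerivAt (fun s : ℝ => |s| ^ e) (e * phi e t) t := by
  rcases ht.lt_or_gt with h | h
  · have houter : HasDerivAt (fun s : ℝ => s ^ e) (e * (-t) ^ (e - 1)) (-t) :=
      Real.hasDerivAt_rpow_const (Or.inl (by linarith))
    have hneg : HasDerivAt (fun s : ℝ => -s) (-1 : ℝ) t := (hasDerivAt_id t).neg
    have hcmp := houter.comp t hneg
    have heq : (fun s : ℝ => (-s) ^ e) =ᶠ[𝓝 t] (fun s : ℝ => |s| ^ e) := by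
      filter_upwards [Iio_mem_nhds h] with s hs
      rw [abs_of_neg hs]
    have h2 := hcmp.congr_of_eventuallyEq heq.symm
    refine h2.congr_deriv (Eq.symm ?_)
    rw [phi, abs_of_neg h]
    have h3 : (-t) * (-t) ^ (e - 2) = (-t) ^ (e - 1) := by
      rw [rpow_add_one' (by linarith : (0:ℝ) < -t), show e - 2 + 1 = e - 1 from by ring]
    rw [show t * (-t) ^ (e-2) = -((-t) * (-t)^(e-2)) by ring, h3]; ring
  · have houter : HasDerivAt (fun s : ℝ => s ^ e) (e * t ^ (e - 1)) t :=
      Real.hasDerivAt_rpow_const (Or.inl (by linarith))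
    have heq : (fun s : ℝ => s ^ e) =ᶠ[𝓝 t] (fun s : ℝ => |s| ^ e) := by
      filter_upwards [Ioi_mem_nhds h] with s hs
      rw [abs_of_pos hs]
    have h2 := houter.congr_of_eventuallyEq heq.symm
    refine h2.congr_deriv (Eq.symm ?_)
    rw [phi, abs_of_pos h]
    have h3 : t * t ^ (e - 2) = t ^ (e - 1) := by
      rw [rpow_add_one' h, show e - 2 + 1 = e - 1 from by ring]
    rw [h3]

/-- derivative of `|s|^e` everywhere, for `e > 1`. -/
lemma hasDerivAt_abs_rpow' {e : ℝ} (he : 1 < e) (t : ℝ) :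
    HasDerivAt (fun s : ℝ => |s| ^ e) (e * phi e t) t := by
  have h := hasDerivAt_abs_rpow t he
  convert h using 1
  rw [phi]
  rcases eq_or_ne t 0 with rfl | ht
  · simp
  · ring

/-- derivative of `phi e` at a nonzero point. -/
lemma hasDerivAt_phi {e t : ℝ} (ht : t ≠ 0) :
    HasDerivAt (fun s : ℝ => phi e s) (phi' e t) t := by
  have h1 : (0:ℝ) < |t| := abs_pos.2 ht
  have habs : HasDerivAt (fun s : ℝ => |s| ^ (e - 2)) ((e - 2) * phi (e - 2) t) t :=
    hasDerivAt_abs_rpow_ne ht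
  have hid : HasDerivAt (fun s : ℝ => s) (1:ℝ) t := hasDerivAt_id t
  have hmul : HasDerivAt (fun s : ℝ => s * |s| ^ (e - 2)) (1 * |t| ^ (e - 2) + t * ((e - 2) * phi (e - 2) t)) t := hid.mul habs
  have heq : (fun s : ℝ => s * |s| ^ (e - 2)) = fun s : ℝ => phi e s := by
    funext s; rfl
  rw [heq] at hmul
  convert hmul using 1
  rw [phi', phi]
  have h3 : t * (t * |t| ^ (e - 2 - 2)) = |t| ^ (e - 2) := by
    rw [show t * (t * |t| ^ (e - 2 - 2)) = (t * t) * |t| ^ (e - 2 - 2) by ring,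
      ← abs_mul_abs_self t, mul_assoc, rpow_add_one' h1, rpow_add_one' h1,
      show e - 2 - 2 + 1 + 1 = e - 2 from by ring]
  rw [show (1:ℝ) * |t| ^ (e-2) + t * ((e-2) * (t * |t| ^ (e - 2 - 2)))
      = |t| ^ (e-2) + (e-2) * (t * (t * |t| ^ (e - 2 - 2))) by ring, h3]
  ring

/-- constancy from zero derivative on an open interval -/
lemma eq_of_hasDerivAt_zero_Ioo {F : ℝ → ℝ} {a b x y : ℝ}
    (hF : ∀ z ∈ Ioo a b, HasDerivAt F 0 z) (hx : x ∈ Ioo a b) (hy : y ∈ Ioo a b) :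
    F x = F y := by
  wlog hxy : x ≤ y generalizing x y
  · exact (this hy hx (by linarith)).symm
  have hsub : Icc x y ⊆ Ioo a b := fun z hz => ⟨lt_of_lt_of_le hx.1 hz.1, lt_of_le_of_lt hz.2 hy.2⟩
  have h := constant_of_has_deriv_right_zero (f := F) (a := x) (b := y)
    (fun z hz => (hF z (hsub hz)).continuousAt.continuousWithinAt)
    (fun z hz => ((hF z (hsub ⟨hz.1, hz.2.le⟩)).hasDerivWithinAt))
  exact (h y (right_mem_Icc.2 hxy)).symm

set_option maxHeartbeats 1000000 in
/-- Lemma 3.7: the inequality `(p-1)w(x₀)φ_p(u'(x₀)) - u(x₀)w'(x₀)φ_p'(u'(x₀)) > 0`,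
and in particular `w'(x₀) < 0`. -/
theorem stmt17 (p : ℝ) (hp : 1 < p) (lam : ℝ) (hlam : 0 < lam)
    (f : ℝ → ℝ) (hf : ContDiffOn ℝ 1 f (Set.Ici 0))
    (γ : ℝ) (hγ : 0 < γ)
    (hneg : ∀ v ∈ Set.Ioo (0:ℝ) γ, f v < 0)
    (hpos : ∀ v > γ, 0 < f v)
    (hconv : ∀ v > γ, 0 < deriv f v - (p - 1) * f v / v)
    (u : ℝ → ℝ) (hu : Sol1D p lam f u)
    (x₀ : ℝ) (hx₀ : x₀ ∈ Set.Ioo (0:ℝ) 1) (hux₀ : u x₀ = γ)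
    (w : ℝ → ℝ) (hw : Lin1D p lam f u w)
    (hwpos : ∀ x ∈ Set.Ioo (-1:ℝ) 1, 0 < w x) :
    0 < (p - 1) * w x₀ * phi p (du u x₀) - u x₀ * du w x₀ * phi' p (du u x₀) ∧
    du w x₀ < 0 := by
  classical
  obtain ⟨hx₀0, hx₀1⟩ := hx₀
  have hp1 : (0:ℝ) < p - 1 := by linarith
  have hq1 : 1 < p / (p - 1) := (one_lt_div hp1).2 (by linarith)
  set q : ℝ := p / (p - 1) with hqdef
  have hq0 : q ≠ 0 := by intro h; rw [h] at hq1; linarith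
  have hI1 : (-1:ℝ) < 1 := by norm_num
  have hIsub : Ioo (-1:ℝ) 1 ⊆ Icc (-1:ℝ) 1 := Ioo_subset_Icc_self
  have hInb : ∀ x ∈ Ioo (-1:ℝ) 1, Icc (-1:ℝ) 1 ∈ 𝓝 x := fun x hx => Icc_mem_nhds hx.1 hx.2
  have hIonb : ∀ x ∈ Ioo (-1:ℝ) 1, Ioo (-1:ℝ) 1 ∈ 𝓝 x := fun x hx => Ioo_mem_nhds hx.1 hx.2
  have hx₀I : x₀ ∈ Ioo (-1:ℝ) 1 := ⟨by linarith, hx₀1⟩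
  -- basic derivative facts
  have hdu_eq : ∀ x ∈ Ioo (-1:ℝ) 1, du u x = deriv u x := by
    intro x hx; exact derivWithin_of_mem_nhds (hInb x hx)
  have hdw_eq : ∀ x ∈ Ioo (-1:ℝ) 1, du w x = deriv w x := by
    intro x hx; exact derivWithin_of_mem_nhds (hInb x hx)
  have hdud : ∀ x ∈ Ioo (-1:ℝ) 1, HasDerivAt u (du u x) x := by
    intro x hx
    have h1 : DifferentiableWithinAt ℝ u (Icc (-1:ℝ) 1) x :=
      hu.reg.differentiableOn one_ne_zero x (hIsub hx)
    have h2 : DifferentiableAt ℝ u x := h1.differentiableAt (hInb x hx)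
    rw [hdu_eq x hx]; exact h2.hasDerivAt
  have hdwd : ∀ x ∈ Ioo (-1:ℝ) 1, HasDerivAt w (du w x) x := by
    intro x hx
    have h1 : DifferentiableWithinAt ℝ w (Icc (-1:ℝ) 1) x :=
      hw.reg.differentiableOn one_ne_zero x (hIsub hx)
    have h2 : DifferentiableAt ℝ w x := h1.differentiableAt (hInb x hx)
    rw [hdw_eq x hx]; exact h2.hasDerivAt
  have hducont : ContinuousOn (du u) (Icc (-1:ℝ) 1) :=
    hu.reg.continuousOn_derivWithin (uniqueDiffOn_Icc hI1) le_rfl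
  have hdwcont : ContinuousOn (du w) (Icc (-1:ℝ) 1) :=
    hw.reg.continuousOn_derivWithin (uniqueDiffOn_Icc hI1) le_rfl
  set v : ℝ → ℝ := fun y => phi p (du u y) with hvdef
  set g : ℝ → ℝ := fun y => phi' p (du u y) * du w y with hgdef
  have hvreg : ContDiffOn ℝ 1 v (Ioo (-1:ℝ) 1) := by rw [hvdef]; exact hu.reg'
  have hgreg : ContDiffOn ℝ 1 g (Ioo (-1:ℝ) 1) := by rw [hgdef]; exact hw.reg'
  have hvd : ∀ x ∈ Ioo (-1:ℝ) 1, HasDerivAt v (-(lam * f (u x))) x := by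
    intro x hx
    have h2 : DifferentiableAt ℝ v x :=
      (hvreg.differentiableOn one_ne_zero x hx).differentiableAt (hIonb x hx)
    have h3 := h2.hasDerivAt
    have h4 := hu.ode x hx
    have h5 : deriv v x = -(lam * f (u x)) := by rw [hvdef]; linarith
    rwa [h5] at h3
  have hgd : ∀ x ∈ Ioo (-1:ℝ) 1, HasDerivAt g (-(lam * deriv f (u x) * w x)) x := by
    intro x hx
    have h2 : DifferentiableAt ℝ g x :=
      (hgreg.differentiableOn one_ne_zero x hx).differentiableAt (hIonb x hx)
    have h3 := h2.hasDerivAt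
    have h4 := hw.ode x hx
    have h5 : deriv g x = -(lam * deriv f (u x) * w x) := by rw [hgdef]; linarith
    rwa [h5] at h3
  have hvu : ∀ x ∈ Ioo (-1:ℝ) 1, du u x = phi q (v x) := by
    intro x hx
    simp only [hvdef, hqdef]
    exact (phi_phi hp (du u x)).symm
  have hunonneg : ∀ x ∈ Icc (-1:ℝ) 1, 0 ≤ u x := by
    intro x hx
    rcases eq_or_lt_of_le hx.1 with h | h
    · rw [← h, hu.bcm]
    · rcases eq_or_lt_of_le hx.2 with h' | h'
      · rw [h', hu.bc1]
      · exact (hu.pos x ⟨h, h'⟩).le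
  have hfd : ∀ t : ℝ, 0 < t → HasDerivAt f (deriv f t) t := by
    intro t ht
    have h1 : DifferentiableWithinAt ℝ f (Ici 0) t :=
      hf.differentiableOn one_ne_zero t (mem_Ici.2 ht.le)
    exact (h1.differentiableAt (Ici_mem_nhds ht)).hasDerivAt
  -- the primitive F
  set F : ℝ → ℝ := fun t => ∫ s in (0:ℝ)..t, f s with hFdef
  have hFd : ∀ t : ℝ, 0 < t → HasDerivAt F (f t) t := by
    intro t ht
    have hfc : ContinuousOn f (Ici 0) := hf.continuousOn
    have hint : IntervalIntegrable f MeasureTheory.volume 0 t := by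
      apply ContinuousOn.intervalIntegrable
      rw [uIcc_of_le ht.le]
      exact hfc.mono Icc_subset_Ici_self
    have hmeas : StronglyMeasurableAtFilter f (𝓝 t) MeasureTheory.volume :=
      ContinuousOn.stronglyMeasurableAtFilter isOpen_Ioi (hfc.mono Ioi_subset_Ici_self) t ht
    have hcont : ContinuousAt f t := (hfc t ht.le).continuousAt (Ici_mem_nhds ht)
    exact intervalIntegral.integral_hasDerivAt_right hint hmeas hcont
  -- energy conservation
  have hE : ∀ x ∈ Ioo (-1:ℝ) 1, ∀ y ∈ Ioo (-1:ℝ) 1,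
      q⁻¹ * |v x| ^ q + lam * F (u x) = q⁻¹ * |v y| ^ q + lam * F (u y) := by
    intro x hx y hy
    apply eq_of_hasDerivAt_zero_Ioo (F := fun z => q⁻¹ * |v z| ^ q + lam * F (u z)) ?_ hx hy
    intro z hz
    have h1 : HasDerivAt (fun s : ℝ => |s| ^ q) (q * phi q (v z)) (v z) :=
      hasDerivAt_abs_rpow' hq1 (v z)
    have h2 : HasDerivAt (fun y => |v y| ^ q) (q * phi q (v z) * -(lam * f (u z))) z :=
      h1.comp z (hvd z hz)
    have h3 : HasDerivAt (fun y => F (u y)) (f (u z) * du u z) z :=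
      (hFd (u z) (hu.pos z hz)).comp z (hdud z hz)
    have h4 := (h2.const_mul q⁻¹).add (h3.const_mul lam)
    refine h4.congr_deriv (Eq.symm ?_)
    rw [← hvu z hz]
    field_simp
    ring
  -- max point
  have hne : (Icc (-1:ℝ) 1).Nonempty := nonempty_Icc.2 (by norm_num)
  obtain ⟨c, hcmem, hcmax'⟩ := isCompact_Icc.exists_isMaxOn hne hu.reg.continuousOn
  have hmax : ∀ y ∈ Icc (-1:ℝ) 1, u y ≤ u c := isMaxOn_iff.mp hcmax'
  set M : ℝ := u c with hMdef
  have hγM : γ ≤ M := by rw [← hux₀]; exact hmax x₀ (hIsub hx₀I)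
  have hcI : c ∈ Ioo (-1:ℝ) 1 := by
    constructor
    · rcases eq_or_lt_of_le hcmem.1 with h | h
      · exfalso; rw [hMdef, ← h, hu.bcm] at hγM; linarith
      · exact h
    · rcases eq_or_lt_of_le hcmem.2 with h | h
      · exfalso; rw [hMdef, h, hu.bc1] at hγM; linarith
      · exact h
  have hduc : du u c = 0 := by
    have h1 : deriv u c = 0 := (hcmax'.isLocalMax (hInb c hcI)).deriv_eq_zero
    rw [hdu_eq c hcI]; exact h1
  have hvc : v c = 0 := by simp only [hvdef]; rw [hduc, phi_zero]
  -- f γ = 0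
  have hfγ : f γ = 0 := by
    have hcw : ContinuousWithinAt f (Ici 0) γ := hf.continuousOn γ (mem_Ici.2 hγ.le)
    have hle : f γ ≤ 0 := by
      haveI : (𝓝[Ioo (0:ℝ) γ] γ).NeBot := by
        apply mem_closure_iff_nhdsWithin_neBot.mp
        rw [closure_Ioo hγ.ne]
        exact right_mem_Icc.2 hγ.le
      have h1 : Filter.Tendsto f (𝓝[Ioo (0:ℝ) γ] γ) (𝓝 (f γ)) :=
        hcw.mono (fun s hs => le_of_lt hs.1)
      apply le_of_tendsto h1
      filter_upwards [self_mem_nhdsWithin] with y hy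
      exact (hneg y hy).le
    have hge : 0 ≤ f γ := by
      haveI : (𝓝[Ioo γ (γ+1)] γ).NeBot := by
        apply mem_closure_iff_nhdsWithin_neBot.mp
        rw [closure_Ioo (by linarith : γ ≠ γ + 1)]
        exact left_mem_Icc.2 (by linarith)
      have h1 : Filter.Tendsto f (𝓝[Ioo γ (γ+1)] γ) (𝓝 (f γ)) :=
        hcw.mono (fun s hs => le_of_lt (hγ.trans hs.1))
      apply ge_of_tendsto h1
      filter_upwards [self_mem_nhdsWithin] with y hy
      exact (hpos y hy.1).le
    linarith
  -- M > γ
  have hMγ : γ < M := by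
    rcases eq_or_lt_of_le hγM with heq | h
    swap; · exact h
    exfalso
    have humax : ∀ z ∈ Icc (-1:ℝ) 1, u z ≤ γ := by
      intro z hz; rw [heq]; exact hmax z hz
    have hd0 : du u x₀ = 0 := by
      have hmax0 : IsMaxOn u (Icc (-1:ℝ) 1) x₀ := by
        intro y hy
        simp only [mem_setOf_eq, hux₀]
        exact humax y hy
      have h1 : deriv u x₀ = 0 := (hmax0.isLocalMax (hInb x₀ hx₀I)).deriv_eq_zero
      rw [hdu_eq x₀ hx₀I]; exact h1
    have hv0 : v x₀ = 0 := by simp only [hvdef]; rw [hd0, phi_zero]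
    have hfle : ∀ z ∈ Ioo (-1:ℝ) 1, f (u z) ≤ 0 := by
      intro z hz
      rcases eq_or_lt_of_le (humax z (hIsub hz)) with h' | h'
      · rw [h']; exact hfγ.le
      · exact (hneg (u z) ⟨hu.pos z hz, h'⟩).le
    have hvge : ∀ z ∈ Ioo (-1:ℝ) 1, x₀ ≤ z → 0 ≤ v z := by
      intro z hz hxz
      rcases eq_or_lt_of_le hxz with rfl | hxz'
      · rw [hv0]
      · have hmono : MonotoneOn v (Icc x₀ z) := by
          apply monotoneOn_of_deriv_nonneg (convex_Icc _ _)
          · exact hvreg.continuousOn.mono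
              (fun y hy => ⟨lt_of_lt_of_le hx₀I.1 hy.1, lt_of_le_of_lt hy.2 hz.2⟩)
          · intro y hy
            rw [interior_Icc] at hy
            have hyI : y ∈ Ioo (-1:ℝ) 1 := ⟨lt_trans hx₀I.1 hy.1, lt_trans hy.2 hz.2⟩
            exact ((hvd y hyI).differentiableAt).differentiableWithinAt
          · intro y hy
            rw [interior_Icc] at hy
            have hyI : y ∈ Ioo (-1:ℝ) 1 := ⟨lt_trans hx₀I.1 hy.1, lt_trans hy.2 hz.2⟩
            rw [(hvd y hyI).deriv]
            have := hfle y hyI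
            nlinarith
        have := hmono (left_mem_Icc.2 hxz) (right_mem_Icc.2 hxz) hxz
        rw [hv0] at this
        exact this
    have humono : MonotoneOn u (Icc x₀ 1) := by
      apply monotoneOn_of_deriv_nonneg (convex_Icc _ _)
      · exact hu.reg.continuousOn.mono (Icc_subset_Icc (by linarith) le_rfl)
      · intro y hy
        rw [interior_Icc] at hy
        have hyI : y ∈ Ioo (-1:ℝ) 1 := ⟨lt_trans hx₀I.1 hy.1, hy.2⟩
        exact (hdud y hyI).differentiableAt.differentiableWithinAt
      · intro y hy
        rw [interior_Icc] at hy
        have hyI : y ∈ Ioo (-1:ℝ) 1 := ⟨lt_trans hx₀I.1 hy.1, hy.2⟩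
        rw [← hdu_eq y hyI]
        have h1 : 0 ≤ v y := hvge y hyI hy.1.le
        simp only [hvdef] at h1
        exact phi_nonneg_iff.mp h1
    have h1 : u x₀ ≤ u 1 :=
      humono (left_mem_Icc.2 hx₀1.le) (right_mem_Icc.2 hx₀1.le) hx₀1.le
    rw [hux₀, hu.bc1] at h1
    linarith
  -- F strictly monotone on [γ, ∞)
  have hFmono : StrictMonoOn F (Ici γ) := by
    apply strictMonoOn_of_deriv_pos (convex_Ici γ)
    · intro t ht
      exact (hFd t (lt_of_lt_of_le hγ ht)).continuousAt.continuousWithinAt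
    · intro t ht
      rw [interior_Ici] at ht
      rw [(hFd t (hγ.trans ht)).deriv]
      exact hpos t ht
  -- classification of zeros of v
  have hfz : ∀ z ∈ Ioo (-1:ℝ) 1, v z = 0 → f (u z) ≠ 0 := by
    intro z hz hvz
    have hFz : F (u z) = F M := by
      have h := hE z hz c hcI
      rw [hvz, hvc] at h
      simp only [abs_zero] at h
      rw [Real.zero_rpow hq0] at h
      have h2 : lam * F (u z) = lam * F M := by linarith
      exact mul_left_cancel₀ (ne_of_gt hlam) h2
    rcases lt_trichotomy (u z) γ with h | h | h
    · exact ne_of_lt (hneg (u z) ⟨hu.pos z hz, h⟩)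
    · exfalso
      rw [h] at hFz
      exact absurd hFz (ne_of_lt (hFmono self_mem_Ici (mem_Ici.2 hγM) hMγ))
    · have hM : u z = M := hFmono.injOn (mem_Ici.2 h.le) (mem_Ici.2 hγM) hFz
      rw [hM]
      exact ne_of_gt (hpos M hMγ)
  -- no two zeros of v
  have hpair : ∀ z₁ z₂, z₁ ∈ Ioo (-1:ℝ) 1 → z₂ ∈ Ioo (-1:ℝ) 1 → z₁ < z₂ →
      v z₁ = 0 → v z₂ = 0 → (∀ y ∈ Ioo z₁ z₂, v y ≠ 0) → False := by
    intro z₁ z₂ hz₁ hz₂ hlt hv1 hv2 hvne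
    have hsub : Ioo z₁ z₂ ⊆ Ioo (-1:ℝ) 1 :=
      fun y hy => ⟨hz₁.1.trans hy.1, hy.2.trans hz₂.2⟩
    have hsubc : Icc z₁ z₂ ⊆ Ioo (-1:ℝ) 1 :=
      fun y hy => ⟨lt_of_lt_of_le hz₁.1 hy.1, lt_of_le_of_lt hy.2 hz₂.2⟩
    have hdu1 : du u z₁ = 0 := by
      have : phi p (du u z₁) = 0 := hv1
      exact phi_eq_zero_iff.mp this
    have hdu2 : du u z₂ = 0 := by
      have : phi p (du u z₂) = 0 := hv2
      exact phi_eq_zero_iff.mp this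
    have hdune : ∀ x ∈ Ioo z₁ z₂, du u x ≠ 0 := by
      intro x hx h0
      apply hvne x hx
      simp only [hvdef]
      rw [h0, phi_zero]
    have hU : ∀ x ∈ Ioo z₁ z₂, HasDerivAt (du u) (phi' q (v x) * -(lam * f (u x))) x := by
      intro x hx
      have hxI := hsub hx
      have houter : HasDerivAt (fun s => phi q s) (phi' q (v x)) (v x) :=
        hasDerivAt_phi (hvne x hx)
      have hcomp := houter.comp x (hvd x hxI)
      apply hcomp.congr_of_eventuallyEq
      filter_upwards [hIonb x hxI] with y hy
      exact hvu y hy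
    set K : ℝ → ℝ := fun y => -(lam * f (u y) * w y) - du u y * g y with hKdef
    have hKd : ∀ x ∈ Ioo z₁ z₂, HasDerivAt K 0 x := by
      intro x hx
      have hxI := hsub hx
      have hfu : HasDerivAt (fun y => f (u y)) (deriv f (u x) * du u x) x :=
        (hfd (u x) (hu.pos x hxI)).comp x (hdud x hxI)
      have h1 := ((hfu.const_mul lam).mul (hdwd x hxI)).neg
      have h2 := (hU x hx).mul (hgd x hxI)
      have h3 := h1.sub h2
      have hkey := phi'_phi' hp (hdune x hx)
      refine h3.congr_deriv (Eq.symm ?_)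
      simp only [hvdef, hgdef, hqdef]
      linear_combination (-(lam * f (u x) * du w x)) * hkey
    set s₀ : ℝ := (z₁ + z₂) / 2 with hs₀def
    have hs₀ : s₀ ∈ Ioo z₁ z₂ := ⟨by rw [hs₀def]; linarith, by rw [hs₀def]; linarith⟩
    have hKconst : ∀ x ∈ Ioo z₁ z₂, K x = K s₀ :=
      fun x hx => eq_of_hasDerivAt_zero_Ioo hKd hx hs₀
    have hKcont : ContinuousOn K (Ioo (-1:ℝ) 1) := by
      apply ContinuousOn.sub
      · apply ContinuousOn.neg
        apply ContinuousOn.mul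
        · apply ContinuousOn.mul continuousOn_const
          apply ContinuousOn.comp hf.continuousOn (hu.reg.continuousOn.mono hIsub)
          intro y hy
          exact mem_Ici.2 (hu.pos y hy).le
        · exact hw.reg.continuousOn.mono hIsub
      · exact (hducont.mono hIsub).mul hgreg.continuousOn
    have hKz₁ : K z₁ = K s₀ := by
      haveI : (𝓝[Ioo z₁ z₂] z₁).NeBot := by
        apply mem_closure_iff_nhdsWithin_neBot.mp
        rw [closure_Ioo hlt.ne]
        exact left_mem_Icc.2 hlt.le
      have h1 : Filter.Tendsto K (𝓝[Ioo z₁ z₂] z₁) (𝓝 (K z₁)) :=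
        (hKcont z₁ hz₁).mono hsub
      have h2 : Filter.Tendsto K (𝓝[Ioo z₁ z₂] z₁) (𝓝 (K s₀)) := by
        apply Filter.Tendsto.congr' _ tendsto_const_nhds
        filter_upwards [self_mem_nhdsWithin] with y hy
        exact (hKconst y hy).symm
      exact tendsto_nhds_unique h1 h2
    have hκval : K s₀ = -(lam * f (u z₁) * w z₁) := by
      rw [← hKz₁]
      simp only [hKdef]
      rw [hdu1]
      ring
    have hκne : K s₀ ≠ 0 := by
      rw [hκval]
      have hw1 : 0 < w z₁ := hwpos z₁ hz₁
      have hf1 : f (u z₁) ≠ 0 := hfz z₁ hz₁ hv1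
      intro h
      have h2 := mul_ne_zero (mul_ne_zero (ne_of_gt hlam) hf1) (ne_of_gt hw1)
      exact h2 (by linarith)
    set ρ : ℝ → ℝ := fun y => du u y / w y with hρdef
    have hρd : ∀ x ∈ Ioo z₁ z₂, HasDerivAt ρ (K s₀ / (phi' p (du u x) * w x ^ 2)) x := by
      intro x hx
      have hxI := hsub hx
      have hwx : 0 < w x := hwpos x hxI
      have hph : 0 < phi' p (du u x) := phi'_pos hp (hdune x hx)
      have hdiv := (hU x hx).div (hdwd x hxI) (ne_of_gt hwx)
      refine hdiv.congr_deriv (Eq.symm ?_)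
      rw [div_eq_div_iff (ne_of_gt (mul_pos hph (pow_pos hwx 2))) (ne_of_gt (pow_pos hwx 2))]
      have hKx : K x = K s₀ := hKconst x hx
      simp only [hKdef, hgdef] at hKx
      have hkey := phi'_phi' hp (hdune x hx)
      simp only [hvdef, hqdef]
      linear_combination (-(w x ^ 2)) * hKx + (lam * f (u x) * w x ^ 3) * hkey
    have hρcont : ContinuousOn ρ (Icc z₁ z₂) := by
      apply ContinuousOn.div
      · exact hducont.mono (hsubc.trans hIsub)
      · exact hw.reg.continuousOn.mono (hsubc.trans hIsub)
      · intro y hy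
        exact ne_of_gt (hwpos y (hsubc hy))
    have hρ1 : ρ z₁ = 0 := by simp only [hρdef]; rw [hdu1]; simp
    have hρ2 : ρ z₂ = 0 := by simp only [hρdef]; rw [hdu2]; simp
    rcases hκne.lt_or_gt with hκ | hκ
    · have hanti : StrictAntiOn ρ (Icc z₁ z₂) := by
        apply strictAntiOn_of_deriv_neg (convex_Icc _ _) hρcont
        intro x hx
        rw [interior_Icc] at hx
        rw [(hρd x hx).deriv]
        apply div_neg_of_neg_of_pos hκ
        exact mul_pos (phi'_pos hp (hdune x hx)) (pow_pos (hwpos x (hsub hx)) 2)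
      have := hanti (left_mem_Icc.2 hlt.le) (right_mem_Icc.2 hlt.le) hlt
      rw [hρ1, hρ2] at this
      exact lt_irrefl 0 this
    · have hmono : StrictMonoOn ρ (Icc z₁ z₂) := by
        apply strictMonoOn_of_deriv_pos (convex_Icc _ _) hρcont
        intro x hx
        rw [interior_Icc] at hx
        rw [(hρd x hx).deriv]
        apply div_pos hκ
        exact mul_pos (phi'_pos hp (hdune x hx)) (pow_pos (hwpos x (hsub hx)) 2)
      have := hmono (left_mem_Icc.2 hlt.le) (right_mem_Icc.2 hlt.le) hlt
      rw [hρ1, hρ2] at this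
      exact lt_irrefl 0 this
  -- uniqueness of the zero of v
  have hzero : ∀ z ∈ Ioo (-1:ℝ) 1, v z = 0 → z = c := by
    have main : ∀ a b, a ∈ Ioo (-1:ℝ) 1 → b ∈ Ioo (-1:ℝ) 1 → a < b →
        v a = 0 → v b = 0 → False := by
      intro a b ha hb hab hva hvb
      have hfa : f (u a) ≠ 0 := hfz a ha hva
      have hda : HasDerivAt v (-(lam * f (u a))) a := hvd a ha
      have hne0 : -(lam * f (u a)) ≠ 0 := by
        intro h
        exact (mul_ne_zero (ne_of_gt hlam) hfa) (by linarith)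
      have hev : ∀ᶠ y in 𝓝[≠] a, slope v a y ≠ 0 :=
        (hasDerivAt_iff_tendsto_slope.mp hda).eventually_ne hne0
      rw [eventually_nhdsWithin_iff, Metric.eventually_nhds_iff] at hev
      obtain ⟨δ, hδ0, hδ⟩ := hev
      set s : ℝ := a + min δ (b - a) / 2 with hsdef
      have hsa : a < s := by
        rw [hsdef]
        have : 0 < min δ (b - a) := lt_min hδ0 (by linarith)
        linarith
      have hsb : s < b := by
        rw [hsdef]
        have h1 : min δ (b - a) ≤ b - a := min_le_right _ _
        linarith
      have hsfree : ∀ y, a < y → y ≤ s → v y ≠ 0 := by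
        intro y h1 h2 h0
        have hdist : dist y a < δ := by
          rw [Real.dist_eq, abs_of_pos (by linarith : (0:ℝ) < y - a)]
          have h3 : y - a ≤ min δ (b - a) / 2 := by rw [hsdef] at h2; linarith
          have h4 : min δ (b - a) ≤ δ := min_le_left _ _
          linarith
        have h5 := hδ hdist (Set.mem_compl_singleton_iff.mpr (ne_of_gt h1))
        apply h5
        rw [slope_def_field, hva, h0]
        simp
      set Zs : Set ℝ := Icc s b ∩ v ⁻¹' {0} with hZdef
      have hZcl : IsClosed Zs := by
        apply ContinuousOn.preimage_isClosed_of_isClosed _ isClosed_Icc isClosed_singleton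
        apply hvreg.continuousOn.mono
        intro y hy
        exact ⟨lt_trans ha.1 (lt_of_lt_of_le hsa hy.1), lt_of_le_of_lt hy.2 hb.2⟩
      have hZne : Zs.Nonempty := ⟨b, ⟨hsb.le, le_refl b⟩, by simp [hvb]⟩
      have hZbdd : BddBelow Zs := ⟨s, fun y hy => hy.1.1⟩
      set z' : ℝ := sInf Zs with hz'def
      have hz'mem : z' ∈ Zs := hZcl.csInf_mem hZne hZbdd
      have hz'v : v z' = 0 := hz'mem.2
      have hsz' : s < z' := by
        rcases eq_or_lt_of_le hz'mem.1.1 with h | h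
        · exfalso; exact hsfree s hsa le_rfl (h ▸ hz'v)
        · exact h
      have hz'I : z' ∈ Ioo (-1:ℝ) 1 :=
        ⟨lt_trans ha.1 (hsa.trans hsz'), lt_of_le_of_lt hz'mem.1.2 hb.2⟩
      have hfree : ∀ y ∈ Ioo a z', v y ≠ 0 := by
        intro y hy
        rcases le_or_gt y s with h | h
        · exact hsfree y hy.1 h
        · intro h0
          have hymem : y ∈ Zs := ⟨⟨h.le, le_trans hy.2.le hz'mem.1.2⟩, by simp [h0]⟩
          exact absurd (csInf_le hZbdd hymem) (not_le.2 hy.2)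
      exact hpair a z' ha hz'I (hsa.trans hsz') hva hz'v hfree
    intro z hz hvz
    by_contra hnec
    rcases Ne.lt_or_gt hnec with h | h
    · exact main z c hz hcI h hvz hvc
    · exact main c z hcI hz h hvc hvz
  -- sign of v
  have hvneg : ∀ x ∈ Ioo (-1:ℝ) 1, c < x → v x < 0 := by
    intro x hx hcx
    by_contra hnn
    push_neg at hnn
    have hvxne : v x ≠ 0 := fun h => by have := hzero x hx h; linarith
    have hvxpos : 0 < v x := lt_of_le_of_ne hnn (Ne.symm hvxne)
    have hallpos : ∀ y ∈ Ioo c 1, 0 < v y := by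
      intro y hy
      have hyI : y ∈ Ioo (-1:ℝ) 1 := ⟨lt_trans hcI.1 hy.1, hy.2⟩
      have hvy : v y ≠ 0 := fun h => by have := hzero y hyI h; linarith [hy.1]
      rcases lt_or_gt_of_ne hvy with hneg' | hpos'
      swap; · exact hpos'
      exfalso
      rcases lt_trichotomy x y with h | h | h
      · have hcont : ContinuousOn v (Icc x y) :=
          hvreg.continuousOn.mono (fun t ht => ⟨lt_of_lt_of_le hx.1 ht.1, lt_of_le_of_lt ht.2 hyI.2⟩)
        obtain ⟨t, ht, hvt⟩ := intermediate_value_Ioo' h.le hcont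
          (show (0:ℝ) ∈ Ioo (v y) (v x) from ⟨hneg', hvxpos⟩)
        have htI : t ∈ Ioo (-1:ℝ) 1 := ⟨lt_trans hx.1 ht.1, lt_trans ht.2 hyI.2⟩
        have := hzero t htI hvt
        linarith [ht.1]
      · rw [h] at hvxpos; linarith
      · have hcont : ContinuousOn v (Icc y x) :=
          hvreg.continuousOn.mono (fun t ht => ⟨lt_of_lt_of_le hyI.1 ht.1, lt_of_le_of_lt ht.2 hx.2⟩)
        obtain ⟨t, ht, hvt⟩ := intermediate_value_Ioo h.le hcont
          (show (0:ℝ) ∈ Ioo (v y) (v x) from ⟨hneg', hvxpos⟩)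
        have htI : t ∈ Ioo (-1:ℝ) 1 := ⟨lt_trans hyI.1 ht.1, lt_trans ht.2 hx.2⟩
        have := hzero t htI hvt
        have hyc : c < y := hy.1
        linarith [ht.1]
    set b : ℝ := (c + 1) / 2 with hbdef
    have hcb : c < b := by rw [hbdef]; linarith [hcI.2]
    have hb1 : b < 1 := by rw [hbdef]; linarith [hcI.2]
    have hmono : StrictMonoOn u (Icc c b) := by
      apply strictMonoOn_of_deriv_pos (convex_Icc c b)
      · exact hu.reg.continuousOn.mono
          (fun t ht => ⟨le_trans hcI.1.le ht.1, le_trans ht.2 hb1.le⟩)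
      · intro t ht
        rw [interior_Icc] at ht
        have htI : t ∈ Ioo (-1:ℝ) 1 := ⟨lt_trans hcI.1 ht.1, lt_trans ht.2 hb1⟩
        rw [← hdu_eq t htI]
        have h1 : 0 < v t := hallpos t ⟨ht.1, lt_trans ht.2 hb1⟩
        have h2 : 0 < phi p (du u t) := h1
        exact phi_pos_iff.mp h2
    have h1 : u c < u b := hmono (left_mem_Icc.2 hcb.le) (right_mem_Icc.2 hcb.le) hcb
    have h2 : u b ≤ u c := hmax b ⟨by linarith [hcI.1], hb1.le⟩
    linarith
  have hvposL : ∀ x ∈ Ioo (-1:ℝ) 1, x < c → 0 < v x := by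
    intro x hx hxc
    by_contra hnn
    push_neg at hnn
    have hvxne : v x ≠ 0 := fun h => by have := hzero x hx h; linarith
    have hvxneg : v x < 0 := lt_of_le_of_ne hnn hvxne
    have hallneg : ∀ y ∈ Ioo (-1:ℝ) c, v y < 0 := by
      intro y hy
      have hyI : y ∈ Ioo (-1:ℝ) 1 := ⟨hy.1, lt_trans hy.2 hcI.2⟩
      have hvy : v y ≠ 0 := fun h => by have := hzero y hyI h; linarith [hy.2]
      rcases lt_or_gt_of_ne hvy with hneg' | hpos'
      · exact hneg'
      exfalso
      rcases lt_trichotomy x y with h | h | h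
      · have hcont : ContinuousOn v (Icc x y) :=
          hvreg.continuousOn.mono (fun t ht => ⟨lt_of_lt_of_le hx.1 ht.1, lt_of_le_of_lt ht.2 hyI.2⟩)
        obtain ⟨t, ht, hvt⟩ := intermediate_value_Ioo h.le hcont
          (show (0:ℝ) ∈ Ioo (v x) (v y) from ⟨hvxneg, hpos'⟩)
        have htI : t ∈ Ioo (-1:ℝ) 1 := ⟨lt_trans hx.1 ht.1, lt_trans ht.2 hyI.2⟩
        have := hzero t htI hvt
        linarith [ht.2, hy.2]
      · rw [h] at hvxneg; linarith
      · have hcont : ContinuousOn v (Icc y x) :=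
          hvreg.continuousOn.mono (fun t ht => ⟨lt_of_lt_of_le hyI.1 ht.1, lt_of_le_of_lt ht.2 hx.2⟩)
        obtain ⟨t, ht, hvt⟩ := intermediate_value_Ioo' h.le hcont
          (show (0:ℝ) ∈ Ioo (v x) (v y) from ⟨hvxneg, hpos'⟩)
        have htI : t ∈ Ioo (-1:ℝ) 1 := ⟨lt_trans hyI.1 ht.1, lt_trans ht.2 hx.2⟩
        have := hzero t htI hvt
        linarith [ht.2, hxc]
    set b : ℝ := (c + -1) / 2 with hbdef
    have hcb : b < c := by rw [hbdef]; linarith [hcI.1]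
    have hb1 : -1 < b := by rw [hbdef]; linarith [hcI.1]
    have hanti : StrictAntiOn u (Icc b c) := by
      apply strictAntiOn_of_deriv_neg (convex_Icc b c)
      · exact hu.reg.continuousOn.mono
          (fun t ht => ⟨le_trans hb1.le ht.1, le_trans ht.2 hcI.2.le⟩)
      · intro t ht
        rw [interior_Icc] at ht
        have htI : t ∈ Ioo (-1:ℝ) 1 := ⟨lt_trans hb1 ht.1, lt_trans ht.2 hcI.2⟩
        rw [← hdu_eq t htI]
        have h1 : v t < 0 := hallneg t ⟨lt_trans hb1 ht.1, ht.2⟩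
        have h2 : phi p (du u t) < 0 := h1
        exact phi_neg_iff.mp h2
    have h1 : u c < u b := hanti (left_mem_Icc.2 hcb.le) (right_mem_Icc.2 hcb.le) hcb
    have h2 : u b ≤ u c := hmax b ⟨hb1.le, by linarith [hcI.2]⟩
    linarith
  -- monotone pieces
  have hantiR : StrictAntiOn u (Icc c 1) := by
    apply strictAntiOn_of_deriv_neg (convex_Icc c 1)
    · exact hu.reg.continuousOn.mono (Icc_subset_Icc hcI.1.le le_rfl)
    · intro t ht
      rw [interior_Icc] at ht
      have htI : t ∈ Ioo (-1:ℝ) 1 := ⟨lt_trans hcI.1 ht.1, ht.2⟩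
      rw [← hdu_eq t htI]
      have h1 : v t < 0 := hvneg t htI ht.1
      exact phi_neg_iff.mp h1
  have hmonoL : StrictMonoOn u (Icc (-1) c) := by
    apply strictMonoOn_of_deriv_pos (convex_Icc (-1) c)
    · exact hu.reg.continuousOn.mono (Icc_subset_Icc le_rfl hcI.2.le)
    · intro t ht
      rw [interior_Icc] at ht
      have htI : t ∈ Ioo (-1:ℝ) 1 := ⟨ht.1, lt_trans ht.2 hcI.2⟩
      rw [← hdu_eq t htI]
      have h1 : 0 < v t := hvposL t htI ht.2
      exact phi_pos_iff.mp h1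
  -- the inverse function on the left branch
  have hucIoo : ∀ x ∈ Ioo c 1, u x ∈ Ioo 0 M := by
    intro x hx
    constructor
    · have h1 : u 1 < u x := hantiR ⟨hx.1.le, hx.2.le⟩ (right_mem_Icc.2 hcI.2.le) hx.2
      rw [hu.bc1] at h1; exact h1
    · exact hantiR (left_mem_Icc.2 hcI.2.le) ⟨hx.1.le, hx.2.le⟩ hx.1
  have hy₁ex : ∀ m ∈ Ioo (0:ℝ) M, ∃ s, s ∈ Ioo (-1:ℝ) c ∧ u s = m := by
    intro m hm
    have hsub2 : Icc (-1:ℝ) c ⊆ Icc (-1:ℝ) 1 := Icc_subset_Icc le_rfl hcI.2.le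
    have hIVT := intermediate_value_Ioo hcI.1.le (hu.reg.continuousOn.mono hsub2)
    have hmm : m ∈ Ioo (u (-1)) (u c) := by rw [hu.bcm]; exact hm
    obtain ⟨s, hs, hus⟩ := hIVT hmm
    exact ⟨s, hs, hus⟩
  set y₁ : ℝ → ℝ := fun m => if h : ∃ s, s ∈ Ioo (-1:ℝ) c ∧ u s = m then h.choose else 0
    with hy₁def
  have hy₁spec : ∀ m ∈ Ioo (0:ℝ) M, y₁ m ∈ Ioo (-1:ℝ) c ∧ u (y₁ m) = m := by
    intro m hm
    have h := hy₁ex m hm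
    simp only [hy₁def, dif_pos h]
    exact h.choose_spec
  have hy₁cont : ∀ m₀ ∈ Ioo (0:ℝ) M, ContinuousAt y₁ m₀ := by
    intro m₀ hm₀
    obtain ⟨hy₁m, hy₁u⟩ := hy₁spec m₀ hm₀
    rw [Metric.continuousAt_iff]
    intro ε hε
    set ε' : ℝ := min ε (min ((y₁ m₀ + 1) / 2) ((c - y₁ m₀) / 2)) with hε'def
    have hε'0 : 0 < ε' :=
      lt_min hε (lt_min (by linarith [hy₁m.1]) (by linarith [hy₁m.2]))
    have hε'1 : ε' ≤ (y₁ m₀ + 1) / 2 := le_trans (min_le_right _ _) (min_le_left _ _)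
    have hε'2 : ε' ≤ (c - y₁ m₀) / 2 := le_trans (min_le_right _ _) (min_le_right _ _)
    have hmem1 : y₁ m₀ - ε' ∈ Ioo (-1:ℝ) c := ⟨by linarith [hy₁m.1], by linarith [hy₁m.2]⟩
    have hmem2 : y₁ m₀ + ε' ∈ Ioo (-1:ℝ) c := ⟨by linarith [hy₁m.1], by linarith [hy₁m.2]⟩
    have hlt1 : u (y₁ m₀ - ε') < m₀ := by
      have h := hmonoL (Ioo_subset_Icc_self hmem1) (Ioo_subset_Icc_self hy₁m) (by linarith)
      rwa [hy₁u] at h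
    have hlt2 : m₀ < u (y₁ m₀ + ε') := by
      have h := hmonoL (Ioo_subset_Icc_self hy₁m) (Ioo_subset_Icc_self hmem2) (by linarith)
      rwa [hy₁u] at h
    refine ⟨min (m₀ - u (y₁ m₀ - ε')) (u (y₁ m₀ + ε') - m₀),
      lt_min (by linarith) (by linarith), ?_⟩
    intro m hdm
    rw [Real.dist_eq] at hdm
    have habs := abs_lt.mp hdm
    have hm1 : u (y₁ m₀ - ε') < m := by
      have := min_le_left (m₀ - u (y₁ m₀ - ε')) (u (y₁ m₀ + ε') - m₀)
      linarith [habs.1]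
    have hm2 : m < u (y₁ m₀ + ε') := by
      have := min_le_right (m₀ - u (y₁ m₀ - ε')) (u (y₁ m₀ + ε') - m₀)
      linarith [habs.2]
    have hmIoo : m ∈ Ioo (0:ℝ) M := by
      constructor
      · have : 0 < u (y₁ m₀ - ε') :=
          hu.pos _ ⟨hmem1.1, lt_trans hmem1.2 hcI.2⟩
        linarith
      · have : u (y₁ m₀ + ε') < M :=
          hmonoL (Ioo_subset_Icc_self hmem2) (right_mem_Icc.2 (by linarith [hcI.1])) hmem2.2
        linarith
    obtain ⟨hysm, hyum⟩ := hy₁spec m hmIoo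
    rw [Real.dist_eq]
    have hgt : y₁ m₀ - ε' < y₁ m := by
      by_contra hle
      push_neg at hle
      have := hmonoL.monotoneOn (Ioo_subset_Icc_self hysm) (Ioo_subset_Icc_self hmem1) hle
      rw [hyum] at this
      linarith
    have hltt : y₁ m < y₁ m₀ + ε' := by
      by_contra hle
      push_neg at hle
      have := hmonoL.monotoneOn (Ioo_subset_Icc_self hmem2) (Ioo_subset_Icc_self hysm) hle
      rw [hyum] at this
      linarith
    have h6 : |y₁ m - y₁ m₀| < ε' := abs_lt.2 ⟨by linarith, by linarith⟩
    exact lt_of_lt_of_le h6 (min_le_left _ _)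
  -- the reflection identity
  have hθd : ∀ x ∈ Ioo c 1, HasDerivAt (fun y => y₁ (u y) + y) 0 x := by
    intro x hx
    have hxI : x ∈ Ioo (-1:ℝ) 1 := ⟨lt_trans hcI.1 hx.1, hx.2⟩
    have hum : u x ∈ Ioo (0:ℝ) M := hucIoo x hx
    obtain ⟨hsmem, hsval⟩ := hy₁spec (u x) hum
    have hsI : y₁ (u x) ∈ Ioo (-1:ℝ) 1 := ⟨hsmem.1, lt_trans hsmem.2 hcI.2⟩
    have hvs : 0 < v (y₁ (u x)) := hvposL _ hsI hsmem.2
    have hvx : v x < 0 := hvneg x hxI hx.1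
    have hE1 := hE (y₁ (u x)) hsI x hxI
    rw [hsval] at hE1
    have habs : |v (y₁ (u x))| ^ q = |v x| ^ q := by
      have hq0' : q⁻¹ ≠ 0 := inv_ne_zero hq0
      have h2 : q⁻¹ * |v (y₁ (u x))| ^ q = q⁻¹ * |v x| ^ q := by linarith
      exact mul_left_cancel₀ hq0' h2
    have habs2 : |v (y₁ (u x))| = |v x| := by
      rcases lt_trichotomy |v (y₁ (u x))| |v x| with h | h | h
      · exact absurd habs (ne_of_lt (Real.rpow_lt_rpow (abs_nonneg _) h (by linarith)))
      · exact h
      · exact absurd habs.symm (ne_of_lt (Real.rpow_lt_rpow (abs_nonneg _) h (by linarith)))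
    have hvsvx : v (y₁ (u x)) = - v x := by
      rw [abs_of_pos hvs, abs_of_neg hvx] at habs2
      exact habs2
    have hdus : du u (y₁ (u x)) = - du u x := by
      rw [hvu _ hsI, hvu x hxI, hvsvx, phi_odd]
    have hduxne : du u x ≠ 0 := by
      intro h
      have : v x = 0 := by simp only [hvdef]; rw [h, phi_zero]
      linarith [hvx, this]
    have hdusne : du u (y₁ (u x)) ≠ 0 := by rw [hdus]; exact neg_ne_zero.2 hduxne
    have hy₁d : HasDerivAt y₁ (du u (y₁ (u x)))⁻¹ (u x) := by
      apply HasDerivAt.of_local_left_inverse (hy₁cont (u x) hum) (hdud _ hsI) hdusne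
      filter_upwards [Ioo_mem_nhds hum.1 hum.2] with m hm
      exact (hy₁spec m hm).2
    have hcomp := hy₁d.comp x (hdud x hxI)
    have hfinal := hcomp.add (hasDerivAt_id x)
    refine hfinal.congr_deriv (Eq.symm ?_)
    rw [hdus]
    field_simp
    ring
  set κ : ℝ := y₁ (u ((c+1)/2)) + (c+1)/2 with hκdef
  have hmid : (c+1)/2 ∈ Ioo c 1 := ⟨by linarith [hcI.2], by linarith [hcI.2]⟩
  have hθconst : ∀ x ∈ Ioo c 1, y₁ (u x) + x = κ :=
    fun x hx => eq_of_hasDerivAt_zero_Ioo hθd hx hmid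
  have hclose : ∀ x ∈ Ioo c 1, κ - x ∈ Ioo (-1:ℝ) c ∧ u (κ - x) = u x := by
    intro x hx
    have h1 := hθconst x hx
    have h2 := hy₁spec (u x) (hucIoo x hx)
    have h3 : y₁ (u x) = κ - x := by linarith
    rw [← h3]
    exact ⟨h2.1, h2.2⟩
  haveI hne1 : (𝓝[Ioo c 1] c).NeBot := by
    apply mem_closure_iff_nhdsWithin_neBot.mp
    rw [closure_Ioo (ne_of_lt hcI.2)]
    exact left_mem_Icc.2 hcI.2.le
  haveI hne2 : (𝓝[Ioo c 1] 1).NeBot := by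
    apply mem_closure_iff_nhdsWithin_neBot.mp
    rw [closure_Ioo (ne_of_lt hcI.2)]
    exact right_mem_Icc.2 hcI.2.le
  have hκmem : ∀ z : ℝ, Filter.Tendsto (fun x => κ - x) (𝓝[Ioo c 1] z) (𝓝 (κ - z)) :=
    fun z => ((continuous_const.sub continuous_id).tendsto z).mono_left nhdsWithin_le_nhds
  have hκc : κ - c ∈ Icc (-1:ℝ) c := by
    apply isClosed_Icc.mem_of_tendsto (hκmem c)
    filter_upwards [self_mem_nhdsWithin] with x hx
    exact Ioo_subset_Icc_self (hclose x hx).1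
  have hκ1 : κ - 1 ∈ Icc (-1:ℝ) c := by
    apply isClosed_Icc.mem_of_tendsto (hκmem 1)
    filter_upwards [self_mem_nhdsWithin] with x hx
    exact Ioo_subset_Icc_self (hclose x hx).1
  have hulim : ∀ z ∈ Icc (-1:ℝ) c,
      Filter.Tendsto (fun x => u (κ - x)) (𝓝[Ioo c 1] (κ - z)) (𝓝 (u (κ - (κ - z)))) → True := fun _ _ _ => trivial
  have hucomp : ∀ z : ℝ, κ - z ∈ Icc (-1:ℝ) 1 →
      Filter.Tendsto (fun x => u (κ - x)) (𝓝[Ioo c 1] z) (𝓝 (u (κ - z))) := by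
    intro z hz
    have hcw : ContinuousWithinAt u (Icc (-1:ℝ) 1) (κ - z) := hu.reg.continuousOn _ hz
    apply hcw.tendsto.comp
    apply tendsto_nhdsWithin_of_tendsto_nhds_of_eventually_within _ (hκmem z)
    filter_upwards [self_mem_nhdsWithin] with x hx
    exact Icc_subset_Icc le_rfl hcI.2.le (Ioo_subset_Icc_self (hclose x hx).1)
  have huκc : u (κ - c) = M := by
    have hA := hucomp c (Icc_subset_Icc le_rfl hcI.2.le hκc)
    have hB : Filter.Tendsto (fun x => u x) (𝓝[Ioo c 1] c) (𝓝 (u c)) :=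
      (hu.reg.continuousOn c hcmem).mono
        (fun y hy => ⟨le_trans hcI.1.le hy.1.le, hy.2.le⟩)
    have hAB : (fun x => u (κ - x)) =ᶠ[𝓝[Ioo c 1] c] (fun x => u x) := by
      filter_upwards [self_mem_nhdsWithin] with x hx
      exact (hclose x hx).2
    exact tendsto_nhds_unique (hA.congr' hAB) hB
  have huκ1 : u (κ - 1) = 0 := by
    have hA := hucomp 1 (Icc_subset_Icc le_rfl hcI.2.le hκ1)
    have hB : Filter.Tendsto (fun x => u x) (𝓝[Ioo c 1] 1) (𝓝 (u 1)) :=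
      (hu.reg.continuousOn 1 (right_mem_Icc.2 (by norm_num))).mono
        (fun y hy => ⟨le_trans hcI.1.le hy.1.le, hy.2.le⟩)
    have hAB : (fun x => u (κ - x)) =ᶠ[𝓝[Ioo c 1] 1] (fun x => u x) := by
      filter_upwards [self_mem_nhdsWithin] with x hx
      exact (hclose x hx).2
    have := tendsto_nhds_unique (hA.congr' hAB) hB
    rw [this, hu.bc1]
  have hκ2c : κ = 2 * c := by
    have h1 : u (κ - c) = u c := by rw [huκc]
    have := hmonoL.injOn hκc (right_mem_Icc.2 (by linarith [hcI.1])) h1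
    linarith
  have hκ0 : κ = 0 := by
    have h1 : u (κ - 1) = u (-1) := by rw [huκ1, hu.bcm]
    have := hmonoL.injOn hκ1 (left_mem_Icc.2 (by linarith [hcI.1])) h1
    linarith
  have hc0 : c = 0 := by linarith
  -- evenness of u and oddness of u'
  have hueven : ∀ x ∈ Ioo (-1:ℝ) 1, u (-x) = u x := by
    intro x hx
    rcases lt_trichotomy x 0 with h | rfl | h
    · have hmx : -x ∈ Ioo c 1 := ⟨by rw [hc0]; linarith, by linarith [hx.1]⟩
      have h2 := (hclose (-x) hmx).2
      rw [hκ0] at h2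
      norm_num at h2
      exact h2.symm
    · norm_num
    · have hmx : x ∈ Ioo c 1 := ⟨by rw [hc0]; exact h, hx.2⟩
      have h2 := (hclose x hmx).2
      rw [hκ0] at h2
      norm_num at h2
      exact h2
  have hduodd : ∀ x ∈ Ioo (-1:ℝ) 1, du u (-x) = - du u x := by
    intro x hx
    have hmxI : -x ∈ Ioo (-1:ℝ) 1 := ⟨by linarith [hx.2], by linarith [hx.1]⟩
    have h1 : HasDerivAt (fun y : ℝ => u (-y)) (du u (-x) * -1) x :=
      (hdud (-x) hmxI).comp x ((hasDerivAt_id x).neg)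
    have h2 : HasDerivAt u (du u (-x) * -1) x := by
      apply h1.congr_of_eventuallyEq
      filter_upwards [hIonb x hx] with y hy
      exact (hueven y hy).symm
    have h3 := h2.unique (hdud x hx)
    linarith
  -- Wronskian of w and its reflection: g 0 = 0
  have hdwfC : ContinuousOn (derivWithin f (Ici 0)) (Ici 0) :=
    hf.continuousOn_derivWithin (uniqueDiffOn_Ici 0) le_rfl
  obtain ⟨B, hB⟩ := isCompact_Icc.exists_bound_of_continuousOn
    (hdwfC.comp hu.reg.continuousOn hunonneg)
  obtain ⟨Cw, hCw⟩ := isCompact_Icc.exists_bound_of_continuousOn hw.reg.continuousOn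
  have hB0 : 0 ≤ B := le_trans (norm_nonneg _) (hB 0 (by norm_num))
  have hCw0 : 0 ≤ Cw := le_trans (norm_nonneg _) (hCw 0 (by norm_num))
  have hdf_eq : ∀ x ∈ Ioo (-1:ℝ) 1, deriv f (u x) = derivWithin f (Ici 0) (u x) :=
    fun x hx => (derivWithin_of_mem_nhds (Ici_mem_nhds (hu.pos x hx))).symm
  set Cd : ℝ := lam * B * Cw with hCddef
  have hCd0 : 0 ≤ Cd := by positivity
  have hgder_bound : ∀ x ∈ Ioo (-1:ℝ) 1, ‖-(lam * deriv f (u x) * w x)‖ ≤ Cd := by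
    intro x hx
    rw [norm_neg, norm_mul, norm_mul, hdf_eq x hx, hCddef]
    have h1 : ‖lam‖ = lam := by rw [Real.norm_eq_abs, abs_of_pos hlam]
    rw [h1]
    have h2 : ‖derivWithin f (Ici 0) (u x)‖ ≤ B := hB x (hIsub hx)
    have h3 : ‖w x‖ ≤ Cw := hCw x (hIsub hx)
    have h5 : 0 ≤ ‖w x‖ := norm_nonneg _
    have h6 : ‖derivWithin f (Ici 0) (u x)‖ * ‖w x‖ ≤ B * Cw :=
      mul_le_mul h2 h3 h5 hB0
    calc lam * ‖derivWithin f (Ici 0) (u x)‖ * ‖w x‖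
        = lam * (‖derivWithin f (Ici 0) (u x)‖ * ‖w x‖) := by ring
      _ ≤ lam * (B * Cw) := mul_le_mul_of_nonneg_left h6 hlam.le
      _ = lam * B * Cw := by ring
  have hgbdd : ∀ x ∈ Ioo (-1:ℝ) 1, |g x| ≤ |g 0| + Cd * 2 := by
    intro x hx
    have h0I : (0:ℝ) ∈ Ioo (-1:ℝ) 1 := by norm_num
    have hlip := Convex.norm_image_sub_le_of_norm_hasDerivWithin_le
      (f := g) (f' := fun y => -(lam * deriv f (u y) * w y)) (C := Cd) (s := Ioo (-1:ℝ) 1)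
      (fun y hy => (hgd y hy).hasDerivWithinAt) hgder_bound (convex_Ioo _ _) h0I hx
    have hx2 : ‖x - 0‖ ≤ 2 := by
      rw [sub_zero, Real.norm_eq_abs]
      exact abs_le.2 ⟨by linarith [hx.1], by linarith [hx.2]⟩
    have h7 : |g x - g 0| ≤ Cd * 2 := by
      rw [← Real.norm_eq_abs]
      calc ‖g x - g 0‖ ≤ Cd * ‖x - 0‖ := hlip
        _ ≤ Cd * 2 := by nlinarith
    calc |g x| = |g 0 + (g x - g 0)| := by ring_nf
      _ ≤ |g 0| + |g x - g 0| := abs_add_le _ _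
      _ ≤ |g 0| + Cd * 2 := by linarith
  set Cg : ℝ := |g 0| + Cd * 2 with hCgdef
  have hCg0 : 0 ≤ Cg := by positivity
  set Ω : ℝ → ℝ := fun x => -(w x * g (-x)) - w (-x) * g x with hΩdef
  have hΩd : ∀ x ∈ Ioo (-1:ℝ) 1, HasDerivAt Ω 0 x := by
    intro x hx
    have hmxI : -x ∈ Ioo (-1:ℝ) 1 := ⟨by linarith [hx.2], by linarith [hx.1]⟩
    have hgneg : HasDerivAt (fun y : ℝ => g (-y)) (-(lam * deriv f (u (-x)) * w (-x)) * -1) x :=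
      (hgd (-x) hmxI).comp x ((hasDerivAt_id x).neg)
    have hwneg : HasDerivAt (fun y : ℝ => w (-y)) (du w (-x) * -1) x :=
      (hdwd (-x) hmxI).comp x ((hasDerivAt_id x).neg)
    have h1 := (((hdwd x hx).mul hgneg).neg).sub (hwneg.mul (hgd x hx))
    refine h1.congr_deriv (Eq.symm ?_)
    have hux : u (-x) = u x := hueven x hx
    have hgmx : g (-x) = phi' p (du u x) * du w (-x) := by
      simp only [hgdef]
      rw [hduodd x hx, phi'_even]
    have hgx : g x = phi' p (du u x) * du w x := rfl
    rw [hux, hgmx, hgx]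
    ring
  have hΩconst : ∀ x ∈ Ioo (-1:ℝ) 1, Ω x = Ω 0 :=
    fun x hx => eq_of_hasDerivAt_zero_Ioo hΩd hx (by norm_num)
  haveI hne3 : (𝓝[Ioo (0:ℝ) 1] 1).NeBot := by
    apply mem_closure_iff_nhdsWithin_neBot.mp
    rw [closure_Ioo (by norm_num : (0:ℝ) ≠ 1)]
    exact right_mem_Icc.2 (by norm_num)
  have hwlim : Filter.Tendsto (fun x => w x) (𝓝[Ioo (0:ℝ) 1] 1) (𝓝 0) := by
    have h1 := (hw.reg.continuousOn 1 (right_mem_Icc.2 (by norm_num))).mono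
      (fun y (hy : y ∈ Ioo (0:ℝ) 1) => (⟨by linarith [hy.1], hy.2.le⟩ : y ∈ Icc (-1:ℝ) 1))
    rw [ContinuousWithinAt, hw.bc1] at h1
    exact h1
  have hwmlim : Filter.Tendsto (fun x => w (-x)) (𝓝[Ioo (0:ℝ) 1] 1) (𝓝 0) := by
    have hcw : ContinuousWithinAt w (Icc (-1:ℝ) 1) (-1) :=
      hw.reg.continuousOn (-1) (left_mem_Icc.2 (by norm_num))
    have hmap : Filter.Tendsto (fun x : ℝ => -x) (𝓝[Ioo (0:ℝ) 1] 1) (𝓝[Icc (-1:ℝ) 1] (-1)) := by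
      apply tendsto_nhdsWithin_of_tendsto_nhds_of_eventually_within
      · exact (continuous_neg.tendsto 1).mono_left nhdsWithin_le_nhds
      · filter_upwards [self_mem_nhdsWithin] with y hy
        exact ⟨by linarith [hy.2], by linarith [hy.1]⟩
    have h1 := hcw.tendsto.comp hmap
    rw [hw.bcm] at h1
    exact h1
  have hg0 : g 0 = 0 := by
    have hT1 : Filter.Tendsto Ω (𝓝[Ioo (0:ℝ) 1] 1) (𝓝 (Ω 0)) := by
      apply Filter.Tendsto.congr' _ tendsto_const_nhds
      filter_upwards [self_mem_nhdsWithin] with y hy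
      exact (hΩconst y ⟨by linarith [hy.1], hy.2⟩).symm
    have hT2 : Filter.Tendsto Ω (𝓝[Ioo (0:ℝ) 1] 1) (𝓝 0) := by
      refine squeeze_zero_norm' (a := fun y => |w y| * Cg + |w (-y)| * Cg) ?_ ?_
      · filter_upwards [self_mem_nhdsWithin] with y hy
        have hyI : y ∈ Ioo (-1:ℝ) 1 := ⟨by linarith [hy.1], hy.2⟩
        have hmyI : -y ∈ Ioo (-1:ℝ) 1 := ⟨by linarith [hy.2], by linarith [hy.1]⟩
        show ‖Ω y‖ ≤ |w y| * Cg + |w (-y)| * Cg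
        have e1 : ‖Ω y‖ ≤ |w y * g (-y)| + |w (-y) * g y| := by
          simp only [hΩdef]
          rw [Real.norm_eq_abs]
          calc |(-(w y * g (-y)) - w (-y) * g y)| = |(-(w y * g (-y) + w (-y) * g y))| := by ring_nf
            _ = |w y * g (-y) + w (-y) * g y| := abs_neg _
            _ ≤ |w y * g (-y)| + |w (-y) * g y| := abs_add_le _ _
        have e2 : |w y * g (-y)| ≤ |w y| * Cg := by
          rw [abs_mul]
          exact mul_le_mul_of_nonneg_left (hgbdd (-y) hmyI) (abs_nonneg _)
        have e3 : |w (-y) * g y| ≤ |w (-y)| * Cg := by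
          rw [abs_mul]
          exact mul_le_mul_of_nonneg_left (hgbdd y hyI) (abs_nonneg _)
        linarith
      · have h1 := (hwlim.abs.mul_const Cg).add (hwmlim.abs.mul_const Cg)
        simpa using h1
    have hΩ0 : Ω 0 = 0 := tendsto_nhds_unique hT1 hT2
    simp only [hΩdef, neg_zero] at hΩ0
    have hw0 : 0 < w 0 := hwpos 0 (by norm_num)
    have h2 : w 0 * g 0 = 0 := by linarith
    exact (mul_eq_zero.mp h2).resolve_left (ne_of_gt hw0)
  -- the function H
  have hdu0 : du u 0 = 0 := by have h := hduc; rw [hc0] at h; exact h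
  set H : ℝ → ℝ := fun y => (p-1) * w y * v y - u y * g y with hHdef
  have hH0 : H 0 = 0 := by
    have hv0 : v 0 = 0 := by simp only [hvdef]; rw [hdu0, phi_zero]
    simp only [hHdef]
    rw [hv0, hg0]
    ring
  have hHd : ∀ x ∈ Ioo (0:ℝ) x₀,
      HasDerivAt H (lam * w x * (u x * deriv f (u x) - (p-1) * f (u x))) x := by
    intro x hx
    have hxI : x ∈ Ioo (-1:ℝ) 1 := ⟨by linarith [hx.1], lt_trans hx.2 hx₀1⟩
    have h1 := (((hdwd x hxI).const_mul (p-1)).mul (hvd x hxI)).sub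
      ((hdud x hxI).mul (hgd x hxI))
    refine h1.congr_deriv (Eq.symm ?_)
    have hkey := mul_phi' p (du u x)
    simp only [hvdef, hgdef]
    linear_combination (du w x) * hkey
  have hHmono : StrictMonoOn H (Icc 0 x₀) := by
    have hsubH : Icc (0:ℝ) x₀ ⊆ Ioo (-1:ℝ) 1 :=
      fun y hy => ⟨by linarith [hy.1], lt_of_le_of_lt hy.2 hx₀1⟩
    apply strictMonoOn_of_deriv_pos (convex_Icc _ _)
    · apply ContinuousOn.sub
      · exact (continuousOn_const.mul (hw.reg.continuousOn.mono (hsubH.trans hIsub))).mul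
          (hvreg.continuousOn.mono hsubH)
      · exact (hu.reg.continuousOn.mono (hsubH.trans hIsub)).mul
          (hgreg.continuousOn.mono hsubH)
    · intro x hx
      rw [interior_Icc] at hx
      rw [(hHd x hx).deriv]
      have hxI : x ∈ Ioo (-1:ℝ) 1 := ⟨by linarith [hx.1], lt_trans hx.2 hx₀1⟩
      have hux : γ < u x := by
        have hxmem : x ∈ Icc c 1 := ⟨by rw [hc0]; exact hx.1.le, (lt_trans hx.2 hx₀1).le⟩
        have hx₀mem : x₀ ∈ Icc c 1 := ⟨by rw [hc0]; linarith [hx₀0], hx₀1.le⟩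
        have h2 := hantiR hxmem hx₀mem hx.2
        rw [hux₀] at h2
        exact h2
      have hupos : 0 < u x := hγ.trans hux
      have hfconv := hconv (u x) hux
      have h3 : (p-1) * f (u x) / u x < deriv f (u x) := by linarith
      have h4 : (p-1) * f (u x) < deriv f (u x) * u x := by
        rw [div_lt_iff₀ hupos] at h3
        exact h3
      have h5 : 0 < u x * deriv f (u x) - (p-1) * f (u x) := by nlinarith
      exact mul_pos (mul_pos hlam (hwpos x hxI)) h5
  have hHx₀ : 0 < H x₀ := by
    have h1 := hHmono (left_mem_Icc.2 hx₀0.le) (right_mem_Icc.2 hx₀0.le) hx₀0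
    rw [hH0] at h1
    exact h1
  -- conclusion
  have hvx₀ : v x₀ < 0 := hvneg x₀ hx₀I (by rw [hc0]; exact hx₀0)
  have hdux₀ne : du u x₀ ≠ 0 := by
    intro h
    have : v x₀ = 0 := by simp only [hvdef]; rw [h, phi_zero]
    linarith [hvx₀, this]
  constructor
  · have heq : H x₀ = (p - 1) * w x₀ * phi p (du u x₀) - u x₀ * du w x₀ * phi' p (du u x₀) := by
      simp only [hHdef, hvdef, hgdef]
      ring
    rw [← heq]
    exact hHx₀
  · have hwx₀ : 0 < w x₀ := hwpos x₀ hx₀I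
    have hphipos : 0 < phi' p (du u x₀) := phi'_pos hp hdux₀ne
    have h1 : (p-1) * w x₀ * v x₀ < 0 := mul_neg_of_pos_of_neg (mul_pos hp1 hwx₀) hvx₀
    have h2 : u x₀ * g x₀ < 0 := by
      have h3 := hHx₀
      simp only [hHdef] at h3
      linarith
    have h3 : g x₀ < 0 := by
      by_contra hge
      push_neg at hge
      have : 0 ≤ u x₀ * g x₀ := mul_nonneg (by rw [hux₀]; exact hγ.le) hge
      linarith
    have h4 : phi' p (du u x₀) * du w x₀ < 0 := h3
    by_contra hge
    push_neg at hge
    nlinarith
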